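/- Define, for ε ∈ (0, 1/2], E_r(0) = ln 2 − ln(1 + 2√(ε(1−ε))) and E_F(0) = C − ln 2 − ln(√(ε(1−ε))), where C = ln 2 + ε ln ε + (1−ε) ln(1−ε) is the capacity (in nats) of the binary symmetric channel with crossover probability ε. Then for all ε with 0.05 ≤ ε ≤ 1/2, 4·E_r(0) ≥ E_F(0). -/

import Mathlib

set_option maxHeartbeats 1000000

lemma bsc_polyineq_aux (y : ℝ) (h0 : 0 ≤ y) (hB : y ≤ 0.39287) :
    2*(y + y^2/3 + y^3/5 + y^4/7 + y^5/9 + y^6/11 + y^7/13 + y^8/15 + y^9/17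
        + y^10/19 + y^11/21 + y^12/23) + (1/4000)*y^2
      ≤ 2*(1+y)*(y - y^2/2 + y^3/3 - y^4/4 + y^5/5 - y^6/6 + y^7/7 - y^8/8 + y^9/9
        - y^10/10 + y^11/11 - y^12/12 + y^13/13) := by
  have hk : ∀ k : ℕ, y^(k+2) ≤ 0.39287^k * y^2 := by
    intro k
    calc y^(k+2) = y^k * y^2 := by ring
    _ ≤ 0.39287^k * y^2 :=
      mul_le_mul_of_nonneg_right (pow_le_pow_left₀ h0 hB k) (pow_nonneg h0 2)
  have h1 := hk 1; have h2 := hk 2; have h3 := hk 3; have h4 := hk 4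
  have h5 := hk 5; have h6 := hk 6; have h7 := hk 7; have h8 := hk 8
  have h9 := hk 9; have h10 := hk 10; have h11 := hk 11
  have h14 : (0:ℝ) ≤ y^14 := pow_nonneg h0 14
  have hy2 : (0:ℝ) ≤ y^2 := pow_nonneg h0 2
  norm_num at h1 h2 h3 h4 h5 h6 h7 h8 h9 h10 h11
  nlinarith [h1, h2, h3, h4, h5, h6, h7, h8, h9, h10, h11, h14, hy2]

lemma bsc_key_aux (v : ℝ) (h0 : 0 ≤ v) (h2 : v^2 ≤ 0.39287) :
    v * (Real.log (1+v) - Real.log (1-v)) ≤ 2*(1+v^2)*Real.log (1+v^2) := by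
  have hv : v ≤ 0.6268 := by nlinarith
  have hav : |v| < 1 := by rw [abs_of_nonneg h0]; linarith
  have hanv : |(-v)| < 1 := by rwa [abs_neg]
  have hay : |(-(v^2))| < 1 := by
    rw [abs_neg, abs_of_nonneg (sq_nonneg v)]; nlinarith
  have h22 : (v^2)^11 ≤ (0.39287:ℝ)^11 := pow_le_pow_left₀ (sq_nonneg v) h2 11
  have h24 : (v^2)^12 ≤ (0.39287:ℝ)^12 := pow_le_pow_left₀ (sq_nonneg v) h2 12
  have hr1 : |v| ^ 25 / (1 - |v|) ≤ 0.0000925 * v^3 := by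
    rw [abs_of_nonneg h0, div_le_iff₀ (by linarith : (0:ℝ) < 1 - v)]
    nlinarith [pow_nonneg h0 3, mul_le_mul_of_nonneg_left h22 (pow_nonneg h0 3)]
  have hr3 : (v^2) ^ 14 / (1 - v^2) ≤ 0.0000223 * v^4 := by
    rw [div_le_iff₀ (by nlinarith : (0:ℝ) < 1 - v^2)]
    nlinarith [pow_nonneg h0 4, mul_le_mul_of_nonneg_left h24 (pow_nonneg h0 4)]
  have hlm := Real.abs_log_sub_add_sum_range_le hav 24
  have hlp := Real.abs_log_sub_add_sum_range_le hanv 24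
  have hly := Real.abs_log_sub_add_sum_range_le hay 13
  simp only [Finset.sum_range_succ] at hlm hlp hly
  norm_num at hlm hlp hly
  rw [abs_le] at hlm hlp hly
  obtain ⟨hlm1, hlm2⟩ := hlm
  obtain ⟨hlp1, hlp2⟩ := hlp
  obtain ⟨hly1, hly2⟩ := hly
  ring_nf at hlm1 hlp2 hly1 hr1 hr3
  have hd : Real.log (1+v) - Real.log (1-v)
      ≤ 2*(v + v^3/3 + v^5/5 + v^7/7 + v^9/9 + v^11/11 + v^13/13 + v^15/15
          + v^17/17 + v^19/19 + v^21/21 + v^23/23) + 2*(0.0000925*v^3) := by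
    linarith [hlm1, hlp2, hr1]
  have hd2 : v * (Real.log (1+v) - Real.log (1-v))
      ≤ 2*(v^2 + v^4/3 + v^6/5 + v^8/7 + v^10/9 + v^12/11 + v^14/13 + v^16/15
          + v^18/17 + v^20/19 + v^22/21 + v^24/23) + 0.000185*v^4 := by
    calc v * (Real.log (1+v) - Real.log (1-v))
        ≤ v * (2*(v + v^3/3 + v^5/5 + v^7/7 + v^9/9 + v^11/11 + v^13/13 + v^15/15
          + v^17/17 + v^19/19 + v^21/21 + v^23/23) + 2*(0.0000925*v^3)) :=
          mul_le_mul_of_nonneg_left hd h0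
      _ = _ := by ring
  have hL : (v^2 - v^4/2 + v^6/3 - v^8/4 + v^10/5 - v^12/6 + v^14/7 - v^16/8
      + v^18/9 - v^20/10 + v^22/11 - v^24/12 + v^26/13) - 0.0000223*v^4
      ≤ Real.log (1+v^2) := by
    linarith [hly1, hr3]
  have hM : 2*(1+v^2)*((v^2 - v^4/2 + v^6/3 - v^8/4 + v^10/5 - v^12/6 + v^14/7 - v^16/8
      + v^18/9 - v^20/10 + v^22/11 - v^24/12 + v^26/13) - 0.0000223*v^4)
      ≤ 2*(1+v^2)*Real.log (1+v^2) :=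
    mul_le_mul_of_nonneg_left hL (by positivity)
  have hp := bsc_polyineq_aux (v^2) (sq_nonneg v) h2
  have hexp : 2*(v^2 + v^4/3 + v^6/5 + v^8/7 + v^10/9 + v^12/11 + v^14/13 + v^16/15
          + v^18/17 + v^20/19 + v^22/21 + v^24/23) + 0.000185*v^4
      ≤ 2*(1+v^2)*((v^2 - v^4/2 + v^6/3 - v^8/4 + v^10/5 - v^12/6 + v^14/7 - v^16/8
      + v^18/9 - v^20/10 + v^22/11 - v^24/12 + v^26/13) - 0.0000223*v^4) := by
    nlinarith [hp, mul_le_mul_of_nonneg_right h2 (pow_nonneg h0 4)]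
  linarith [hd2, hM, hexp]

theorem bsc_L4_zero_rate (ε : ℝ) (h1 : 0.05 ≤ ε) (h2 : ε ≤ 1 / 2) :
    4 * (Real.log 2 - Real.log (1 + 2 * Real.sqrt (ε * (1 - ε)))) ≥
      (Real.log 2 + ε * Real.log ε + (1 - ε) * Real.log (1 - ε))
        - Real.log 2 - Real.log (Real.sqrt (ε * (1 - ε))) := by
  have hε0 : 0 < ε := by linarith
  have hε1 : 0 < 1 - ε := by linarith
  set a := Real.sqrt ε with ha_def
  set b := Real.sqrt (1 - ε) with hb_def
  have ha2 : a^2 = ε := Real.sq_sqrt hε0.le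
  have hb2 : b^2 = 1 - ε := Real.sq_sqrt hε1.le
  have ha : 0 < a := Real.sqrt_pos.mpr hε0
  have hb : 0 < b := Real.sqrt_pos.mpr hε1
  have hab : a ≤ b := Real.sqrt_le_sqrt (by linarith)
  have hs : Real.sqrt (ε * (1 - ε)) = a * b := Real.sqrt_mul hε0.le _
  have hsum : a^2 + b^2 = 1 := by rw [ha2, hb2]; ring
  have hden : 0 < a + b := by linarith
  have hlogε : Real.log ε = 2 * Real.log a := by
    rw [← ha2, Real.log_pow]; push_cast; ring
  have hlog1ε : Real.log (1 - ε) = 2 * Real.log b := by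
    rw [← hb2, Real.log_pow]; push_cast; ring
  have hsab : 1 + 2*(a*b) = (a+b)^2 := by linear_combination -hsum
  have hlog2s : Real.log (1 + 2*(a*b)) = 2 * Real.log (a+b) := by
    rw [hsab, Real.log_pow]; push_cast; ring
  have hlogab : Real.log (a*b) = Real.log a + Real.log b := Real.log_mul ha.ne' hb.ne'
  set v := (b - a) / (a + b) with hv_def
  have hv0 : 0 ≤ v := div_nonneg (by linarith) (by linarith)
  have hprod : 0.0475 ≤ (a*b)^2 := by
    rw [mul_pow, ha2, hb2]; nlinarith
  have hab2 : 0.217944 ≤ a * b := by nlinarith [mul_nonneg ha.le hb.le]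
  have hv2 : v^2 ≤ 0.39287 := by
    rw [hv_def, div_pow, div_le_iff₀ (by positivity)]
    nlinarith [hsum, hab2]
  have hkey := bsc_key_aux v hv0 hv2
  have h1v : 1 + v = 2*b/(a+b) := by
    rw [hv_def]; field_simp; ring
  have h1mv : 1 - v = 2*a/(a+b) := by
    rw [hv_def]; field_simp; ring
  have h1v2 : 1 + v^2 = 2/(a+b)^2 := by
    rw [hv_def]; field_simp; linear_combination 2*hsum
  have hlog1v : Real.log (1+v) = Real.log 2 + Real.log b - Real.log (a+b) := by
    rw [h1v, Real.log_div (by positivity) hden.ne', Real.log_mul two_ne_zero hb.ne']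
  have hlog1mv : Real.log (1-v) = Real.log 2 + Real.log a - Real.log (a+b) := by
    rw [h1mv, Real.log_div (by positivity) hden.ne', Real.log_mul two_ne_zero ha.ne']
  have hlog1v2 : Real.log (1+v^2) = Real.log 2 - 2*Real.log (a+b) := by
    rw [h1v2, Real.log_div two_ne_zero (by positivity), Real.log_pow]
    push_cast; ring
  rw [hlog1v, hlog1mv, hlog1v2, h1v2] at hkey
  have hk2 := mul_le_mul_of_nonneg_right hkey (by positivity : (0:ℝ) ≤ (a+b)^2)
  have H4 : (b^2 - a^2) * (Real.log b - Real.log a)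
      ≤ 4 * (Real.log 2 - 2*Real.log (a+b)) := by
    have e1 : v * (Real.log 2 + Real.log b - Real.log (a+b)
        - (Real.log 2 + Real.log a - Real.log (a+b))) * (a+b)^2
        = (b^2 - a^2) * (Real.log b - Real.log a) := by
      rw [hv_def]; field_simp; ring
    have e2 : 2 * (2/(a+b)^2) * (Real.log 2 - 2*Real.log (a+b)) * (a+b)^2
        = 4 * (Real.log 2 - 2*Real.log (a+b)) := by
      have hne : ((a+b)^2 : ℝ) ≠ 0 := by positivity
      field_simp
      ring
    rw [e1, e2] at hk2
    exact hk2
  have lhs_eq : 4*(Real.log 2 - Real.log (1 + 2*Real.sqrt (ε*(1-ε))))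
      = 4*(Real.log 2 - 2*Real.log (a+b)) := by rw [hs, hlog2s]
  have egoal : (Real.log 2 + ε * Real.log ε + (1 - ε) * Real.log (1 - ε))
        - Real.log 2 - Real.log (Real.sqrt (ε * (1 - ε)))
      = (b^2 - a^2) * (Real.log b - Real.log a) := by
    rw [hs, hlogab, hlogε, hlog1ε, ← hb2, ← ha2]
    linear_combination (Real.log a + Real.log b) * hsum
  linarith [H4, lhs_eq, egoal]
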